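/- Let T be defined as follows: T_1(δ_l, (l, …, l)) = w(l) and T_1 = 0 otherwise; for h ≥ 1, with m = min(h, k), T_{h+1}(κ, (l, u₁, …, u_{k−1})) = Σ_{u_k ∈ Fin p} T_h(κ − δ_l, (u₁, …, u_k)) · w(l) · (∏_{s=1}^{m} r̃_s(u_s)(l)) · ∏_i r(i)(l)^{(κ − δ_l − Σ_{s=1}^{m} δ_{u_s})(i)} when κ(l) ≥ 1 and the exponent vector is componentwise nonnegative (terms with a negative component omitted), and 0 otherwise. Then for every n > k, Σ_{κ : Σκ = n} Σ_{(t₁,…,t_k) ∈ (Fin p)^k} T_n(κ, (t₁, …, t_k)) = Σ_{c : Fin n → Fin p} W^{(k)}_n(c). -/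

import Mathlib

open Finset

/-- The cell configuration of a cell assignment. -/
def cellConfig {p n : ℕ} (c : Fin n → Fin p) : Fin p → ℕ :=
  fun i => (Finset.univ.filter (fun a => c a = i)).card

/-- The indicator vector `δ_l`. -/
def delta {p : ℕ} (l : Fin p) : Fin p → ℕ := fun i => if i = l then 1 else 0

/-- The `k`-predecessor weight `W^{(k)}` of a cell assignment. -/
def kW {R : Type*} [CommRing R] {p n : ℕ} (k : ℕ) (w : Fin p → R)
    (r : Fin p → Fin p → R) (rt : ℕ → Fin p → Fin p → R) (c : Fin n → Fin p) : R :=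
  (∏ a, w (c a)) *
    (∏ a : Fin n, ∏ b ∈ Finset.univ.filter
        (fun b : Fin n => (a : ℕ) < (b : ℕ) ∧ (b : ℕ) - (a : ℕ) > k),
      r (c a) (c b)) *
    ∏ s ∈ Finset.Icc 1 k, ∏ a : Fin n,
      ∏ b ∈ Finset.univ.filter (fun b : Fin n => (b : ℕ) = (a : ℕ) + s),
        rt s (c a) (c b)

/-- The dynamic-programming table of IncrementalWFOMC2 for the general `k`-th
predecessor relations. -/
def Tk {R : Type*} [CommRing R] {p : ℕ} (k : ℕ) (w : Fin p → R)
    (r : Fin p → Fin p → R) (rt : ℕ → Fin p → Fin p → R) :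
    ℕ → (Fin p → ℕ) → (Fin k → Fin p) → R
  | 0, _, _ => 0
  | 1, κ, t => ∑ l : Fin p, if κ = delta l ∧ t = fun _ => l then w l else 0
  | h + 2, κ, t =>
      if hkpos : 0 < k then
        let l : Fin p := t ⟨0, hkpos⟩
        let m : ℕ := min (h + 1) k
        if 1 ≤ κ l then
          ∑ uk : Fin p,
            let u : Fin k → Fin p :=
              fun i => if hi : (i : ℕ) + 1 < k then t ⟨(i : ℕ) + 1, hi⟩ else uk
            let uc : ℕ → Fin p := fun s => if hs : s < k then u ⟨s, hs⟩ else l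
            let need : Fin p → ℕ :=
              fun i => delta l i + ∑ s ∈ Finset.range m, delta (uc s) i
            if ∀ i, need i ≤ κ i then
              Tk k w r rt (h + 1) (κ - delta l) u * w l *
                (∏ s ∈ Finset.range m, rt (s + 1) (uc s) l) *
                ∏ i, r i l ^ (κ i - need i)
            else 0
        else 0
      else 0

lemma cellConfig_snoc {p n : ℕ} (c : Fin n → Fin p) (l : Fin p) :
    cellConfig (Fin.snoc c l : Fin (n+1) → Fin p) = fun i => cellConfig c i + delta l i := by
  funext i
  simp only [cellConfig, delta, Finset.card_filter]
  rw [Fin.sum_univ_castSucc]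
  simp [Fin.snoc_castSucc, Fin.snoc_last, eq_comm]
lemma prod_split {M : Type*} [CommMonoid M] {N : ℕ} (F : Fin (N+1) → Fin (N+1) → M) :
    ∏ a, ∏ b, F a b =
      (∏ a : Fin N, ∏ b : Fin N, F a.castSucc b.castSucc) *
      (∏ a : Fin N, F a.castSucc (Fin.last N)) *
      (∏ b : Fin N, F (Fin.last N) b.castSucc) * F (Fin.last N) (Fin.last N) := by
  simp only [Fin.prod_univ_castSucc, Finset.prod_mul_distrib]
  rw [mul_assoc, mul_assoc, mul_assoc, mul_left_comm (∏ i : Fin N, F (Fin.last N) i.castSucc)]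

lemma kW_snoc {R : Type*} [CommRing R] {p n : ℕ} (k : ℕ) (w : Fin p → R)
    (r : Fin p → Fin p → R) (rt : ℕ → Fin p → Fin p → R)
    (c : Fin (n+1) → Fin p) (l : Fin p) :
    kW k w r rt (Fin.snoc c l : Fin (n+2) → Fin p) =
      kW k w r rt c * w l *
      (∏ s ∈ Finset.range (min (n+1) k), rt (s+1) (c ⟨n - s, by omega⟩) l) *
      ∏ a ∈ Finset.univ.filter (fun a : Fin (n+1) => (a : ℕ) + k < n + 1), r (c a) l := by
  have hA : ∏ a : Fin (n+2), w ((Fin.snoc c l : Fin (n+2) → Fin p) a) = (∏ a : Fin (n+1), w (c a)) * w l := by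
    rw [Fin.prod_univ_castSucc]; simp
  have hB : (∏ a : Fin (n+2), ∏ b ∈ Finset.univ.filter
        (fun b : Fin (n+2) => (a : ℕ) < (b : ℕ) ∧ (b : ℕ) - (a : ℕ) > k),
        r ((Fin.snoc c l : Fin (n+2) → Fin p) a) ((Fin.snoc c l : Fin (n+2) → Fin p) b)) =
      (∏ a : Fin (n+1), ∏ b ∈ Finset.univ.filter
        (fun b : Fin (n+1) => (a : ℕ) < (b : ℕ) ∧ (b : ℕ) - (a : ℕ) > k),
        r (c a) (c b)) *
      ∏ a ∈ Finset.univ.filter (fun a : Fin (n+1) => (a : ℕ) + k < n + 1), r (c a) l := by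
    simp only [Finset.prod_filter]
    rw [prod_split (F := fun a b => if (a:ℕ) < (b:ℕ) ∧ (b:ℕ) - (a:ℕ) > k
        then r ((Fin.snoc c l : Fin (n+2) → Fin p) a) ((Fin.snoc c l : Fin (n+2) → Fin p) b) else 1)]
    simp only [Fin.snoc_castSucc, Fin.snoc_last, Fin.coe_castSucc, Fin.val_last]
    have h1 : ∀ a : Fin (n+1), ((a:ℕ) < n+1 ∧ n+1 - (a:ℕ) > k) ↔ (a:ℕ) + k < n+1 := by
      intro a; omega
    have h2 : ∀ b : Fin (n+1), ¬ (n+1 < (b:ℕ) ∧ (b:ℕ) - (n+1) > k) := by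
      intro b; have := b.isLt; omega
    simp only [h2, if_false, Finset.prod_const_one, mul_one, lt_irrefl, false_and]
    congr 1
    apply Finset.prod_congr rfl; intro a _
    rw [if_congr (h1 a) rfl rfl]
  have hC : (∏ s ∈ Finset.Icc 1 k, ∏ a : Fin (n+2),
        ∏ b ∈ Finset.univ.filter (fun b : Fin (n+2) => (b : ℕ) = (a : ℕ) + s),
        rt s ((Fin.snoc c l : Fin (n+2) → Fin p) a) ((Fin.snoc c l : Fin (n+2) → Fin p) b)) =
      (∏ s ∈ Finset.Icc 1 k, ∏ a : Fin (n+1),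
        ∏ b ∈ Finset.univ.filter (fun b : Fin (n+1) => (b : ℕ) = (a : ℕ) + s),
        rt s (c a) (c b)) *
      ∏ s ∈ Finset.range (min (n+1) k), rt (s+1) (c ⟨n - s, by omega⟩) l := by
    have row : ∀ s ∈ Finset.Icc 1 k, (∏ a : Fin (n+2),
        ∏ b ∈ Finset.univ.filter (fun b : Fin (n+2) => (b : ℕ) = (a : ℕ) + s),
        rt s ((Fin.snoc c l : Fin (n+2) → Fin p) a) ((Fin.snoc c l : Fin (n+2) → Fin p) b)) =
        (∏ a : Fin (n+1),
          ∏ b ∈ Finset.univ.filter (fun b : Fin (n+1) => (b : ℕ) = (a : ℕ) + s),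
          rt s (c a) (c b)) *
        (if s ≤ n + 1 then rt s (c ⟨n - (s-1), by omega⟩) l else 1) := by
      intro s hs
      rw [Finset.mem_Icc] at hs
      simp only [Finset.prod_filter]
      rw [prod_split (F := fun a b : Fin (n+2) => if (b:ℕ) = (a:ℕ) + s
          then rt s ((Fin.snoc c l : Fin (n+2) → Fin p) a) ((Fin.snoc c l : Fin (n+2) → Fin p) b) else 1)]
      simp only [Fin.snoc_castSucc, Fin.snoc_last, Fin.coe_castSucc, Fin.val_last]
      have h2 : ∀ b : Fin (n+1), ¬ ((b:ℕ) = (n+1) + s) := by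
        intro b; have := b.isLt; omega
      have h3 : ¬ ((n+1 : ℕ) = (n+1) + s) := by omega
      simp only [h2, if_false, Finset.prod_const_one, mul_one, h3]
      congr 1
      by_cases hsn : s ≤ n + 1
      · rw [if_pos hsn]
        rw [Finset.prod_eq_single (⟨n + 1 - s, by omega⟩ : Fin (n+1))]
        · rw [if_pos (by simp; omega)]
          congr 2
          exact Fin.ext (by simp; omega)
        · intro b _ hb
          rw [if_neg]
          intro hcontra
          apply hb
          exact Fin.ext (by simp; omega)
        · intro h; exact absurd (Finset.mem_univ _) h
      · rw [if_neg hsn]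
        apply Finset.prod_eq_one
        intro a _
        rw [if_neg]
        have := a.isLt; omega
    rw [Finset.prod_congr rfl row, Finset.prod_mul_distrib]
    congr 1
    rw [← Finset.prod_subset (h := Finset.Icc_subset_Icc_right (min_le_right (n+1) k))
        (f := fun s => if s ≤ n + 1 then rt s (c ⟨n - (s-1), by omega⟩) l else 1)]
    · rw [show Finset.Icc 1 (min (n+1) k) = Finset.Ico 1 (min (n+1) k + 1) by
        rw [Finset.Ico_add_one_right_eq_Icc]]
      rw [Finset.prod_Ico_eq_prod_range]
      apply Finset.prod_congr rfl
      intro i hi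
      rw [Finset.mem_range] at hi
      rw [Nat.add_comm 1 i]
      rw [if_pos (by omega)]
      norm_num
    · intro x hx hx2
      rw [Finset.mem_Icc] at hx
      rw [Finset.mem_Icc] at hx2
      rw [if_neg (by omega)]
  simp only [kW, hA, hB, hC]
  ring

lemma one_le_cellConfig {p n : ℕ} (c : Fin n → Fin p) (a : Fin n) :
    1 ≤ cellConfig c (c a) :=
  Finset.card_pos.mpr ⟨a, by simp⟩

lemma prod_fib {R : Type*} [CommRing R] {p n : ℕ} (c : Fin n → Fin p)
    (S : Finset (Fin n)) (f : Fin p → R) :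
    ∏ a ∈ S, f (c a) = ∏ i : Fin p, f i ^ (S.filter (fun a => c a = i)).card := by
  rw [Finset.prod_comp]
  rw [← Finset.prod_subset (Finset.subset_univ (S.image c))]
  intro x _ hx
  rw [Finset.card_eq_zero.mpr, pow_zero]
  rw [Finset.filter_eq_empty_iff]
  intro a ha hca
  exact hx (Finset.mem_image.mpr ⟨a, ha, hca⟩)

lemma ite_sum_zero {α M : Type*} [AddCommMonoid M] {P : Prop} [Decidable P]
    {s : Finset α} (f : α → M) :
    (if P then ∑ x ∈ s, f x else 0) = ∑ x ∈ s, if P then f x else 0 := by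
  split_ifs with h
  · rfl
  · simp

set_option maxHeartbeats 2000000 in
lemma Tk_eq {R : Type*} [CommRing R] {p k : ℕ} (hk : 1 ≤ k)
    (w : Fin p → R) (r : Fin p → Fin p → R) (rt : ℕ → Fin p → Fin p → R) :
    ∀ (n : ℕ) (κ : Fin p → ℕ) (t : Fin k → Fin p),
      Tk k w r rt (n + 1) κ t =
        ∑ c : Fin (n + 1) → Fin p,
          if cellConfig c = κ ∧ ∀ j : Fin k, t j = c ⟨n - (j : ℕ), by omega⟩
          then kW k w r rt c else 0 := by
  intro n
  induction n with
  | zero =>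
    intro κ t
    have h1 : Tk k w r rt 1 κ t
        = ∑ l : Fin p, if κ = delta l ∧ t = fun _ => l then w l else 0 := rfl
    rw [h1]
    apply Fintype.sum_equiv (Equiv.funUnique (Fin 1) (Fin p)).symm
    intro l
    show (if κ = delta l ∧ t = fun _ => l then w l else 0) =
      (if cellConfig (fun _ : Fin 1 => l) = κ ∧
          (∀ j : Fin k, t j = (fun _ : Fin 1 => l) ⟨0 - (j : ℕ), by omega⟩)
        then kW k w r rt (fun _ : Fin 1 => l) else 0)
    have hc : cellConfig (fun _ : Fin 1 => l) = delta l := by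
      funext i
      simp only [cellConfig, delta]
      by_cases h : i = l
      · subst h; simp
      · rw [if_neg h, Finset.card_eq_zero.mpr]
        rw [Finset.filter_eq_empty_iff]
        exact fun a _ hh => h hh.symm
    have hw : kW k w r rt (fun _ : Fin 1 => l) = w l := by
      simp only [kW]
      rw [Fin.prod_univ_one, Fin.prod_univ_one]
      have hB : (Finset.univ.filter
          (fun b : Fin 1 => ((0 : Fin 1) : ℕ) < (b : ℕ) ∧ (b : ℕ) - ((0 : Fin 1) : ℕ) > k)) = ∅ := by
        rw [Finset.filter_eq_empty_iff]
        intro b _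
        simp only [Fin.val_zero]
        have := b.isLt; omega
      have hC : ∀ s ∈ Finset.Icc 1 k, (∏ a : Fin 1, ∏ b ∈ Finset.univ.filter
          (fun b : Fin 1 => (b : ℕ) = (a : ℕ) + s), rt s l l) = 1 := by
        intro s hs
        rw [Finset.mem_Icc] at hs
        rw [Fin.prod_univ_one, Finset.prod_eq_one]
        intro b hb
        rw [Finset.mem_filter] at hb
        simp only [Fin.val_zero] at hb
        have := b.isLt; omega
      rw [hB, Finset.prod_empty, Finset.prod_congr rfl hC, Finset.prod_const_one]
      ring
    rw [hc, hw]
    apply if_congr _ rfl rfl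
    constructor
    · rintro ⟨h1, h2⟩
      exact ⟨h1.symm, fun j => by rw [h2]⟩
    · rintro ⟨h1, h2⟩
      refine ⟨h1.symm, funext fun j => ?_⟩
      exact h2 j
  | succ m IH =>
    intro κ t
    have hk0 : 0 < k := hk
    obtain ⟨U, hU⟩ : ∃ U : Fin p → Fin k → Fin p, U = fun uk (i : Fin k) =>
        if hi : (i : ℕ) + 1 < k then t ⟨(i : ℕ) + 1, hi⟩ else uk := ⟨_, rfl⟩
    obtain ⟨UC, hUC⟩ : ∃ UC : Fin p → ℕ → Fin p, UC = fun uk s =>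
        if hs : s < k then U uk ⟨s, hs⟩ else t ⟨0, hk0⟩ := ⟨_, rfl⟩
    obtain ⟨ND, hND⟩ : ∃ ND : Fin p → Fin p → ℕ, ND = fun uk i => delta (t ⟨0, hk0⟩) i +
        ∑ s ∈ Finset.range (min (m + 1) k), delta (UC uk s) i := ⟨_, rfl⟩
    have hunf : Tk k w r rt (m + 2) κ t =
        (if 1 ≤ κ (t ⟨0, hk0⟩) then
          ∑ uk : Fin p,
            (if ∀ i, ND uk i ≤ κ i then
              Tk k w r rt (m + 1) (κ - delta (t ⟨0, hk0⟩)) (U uk) * w (t ⟨0, hk0⟩) *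
                (∏ s ∈ Finset.range (min (m + 1) k), rt (s + 1) (UC uk s) (t ⟨0, hk0⟩)) *
                ∏ i, r i (t ⟨0, hk0⟩) ^ (κ i - ND uk i)
            else 0)
        else 0) := by
      subst hU hUC hND
      rw [Tk, dif_pos hk0]
    rw [hunf]
    have hsplit : ∀ G : (Fin (m + 2) → Fin p) → R,
        ∑ c, G c = ∑ x : Fin p, ∑ c : Fin (m + 1) → Fin p, G (Fin.snoc c x) := by
      intro G
      rw [← Equiv.sum_comp (Fin.snocEquiv (fun _ => Fin p)) G, Fintype.sum_prod_type]
      rfl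
    rw [hsplit]
    by_cases hl : 1 ≤ κ (t ⟨0, hk0⟩)
    case neg =>
      rw [if_neg hl]
      symm
      apply Finset.sum_eq_zero; intro x _
      apply Finset.sum_eq_zero; intro c _
      rw [if_neg]
      rintro ⟨h1, h2⟩
      apply hl
      rw [h2 ⟨0, hk0⟩, ← h1]
      exact one_le_cellConfig _ _
    case pos =>
    rw [if_pos hl]
    symm
    rw [Finset.sum_eq_single_of_mem (t ⟨0, hk0⟩) (Finset.mem_univ _) ?xside]
    case xside =>
      intro x _ hx
      apply Finset.sum_eq_zero; intro c _
      rw [if_neg]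
      rintro ⟨h1, h2⟩
      apply hx
      have h3 := h2 ⟨0, hk0⟩
      have h4 : (⟨m + 1 - ((⟨0, hk0⟩ : Fin k) : ℕ), by omega⟩ : Fin (m + 2)) = Fin.last (m + 1) :=
        Fin.ext (by simp)
      rw [h4, Fin.snoc_last] at h3
      exact h3.symm
    symm
    simp only [IH]
    simp only [Finset.sum_mul]
    simp only [_root_.ite_sum_zero]
    rw [Finset.sum_comm]
    apply Finset.sum_congr rfl
    intro c _
    have hUprev : ∀ uk (j : Fin k) (hj : (j : ℕ) + 1 < k), U uk j = t ⟨(j : ℕ) + 1, hj⟩ := by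
      intro uk j hj; simp only [hU]; rw [dif_pos hj]
    have hUlast : ∀ uk (j : Fin k), ¬((j : ℕ) + 1 < k) → U uk j = uk := by
      intro uk j hj; simp only [hU]; rw [dif_neg hj]
    refine (Finset.sum_eq_single_of_mem (c ⟨m - (k - 1), by omega⟩)
      (Finset.mem_univ _) ?side).trans ?main
    case side =>
      intro uk _ huk
      by_cases hA : ∀ i, ND uk i ≤ κ i
      · rw [if_pos hA]
        have hnB : ¬(cellConfig c = κ - delta (t ⟨0, hk0⟩) ∧
            ∀ j : Fin k, U uk j = c ⟨m - (j : ℕ), by omega⟩) := by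
          rintro ⟨-, h2⟩
          apply huk
          have h3 := h2 ⟨k - 1, by omega⟩
          rw [hUlast uk ⟨k - 1, by omega⟩ (by show ¬(k - 1 + 1 < k); omega)] at h3
          exact h3
        rw [if_neg hnB, zero_mul, zero_mul, zero_mul]
      · rw [if_neg hA]
    case main =>
      have hconf_iff : cellConfig c = κ - delta (t ⟨0, hk0⟩) ↔
          cellConfig (Fin.snoc c (t ⟨0, hk0⟩) : Fin (m + 2) → Fin p) = κ := by
        rw [cellConfig_snoc]
        constructor
        · intro h; funext i
          have hi := congrFun h i
          simp only [Pi.sub_apply] at hi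
          have hd : delta (t ⟨0, hk0⟩) i ≤ κ i := by
            by_cases hil : i = t ⟨0, hk0⟩
            · subst hil; simp only [delta, if_pos rfl]; exact hl
            · simp only [delta, if_neg hil]; omega
          omega
        · intro h; funext i
          have hi := congrFun h i
          simp only [Pi.sub_apply]
          omega
      have ht_iff : (∀ j : Fin k, U (c ⟨m - (k - 1), by omega⟩) j = c ⟨m - (j : ℕ), by omega⟩) ↔
          (∀ j : Fin k, t j =
            (Fin.snoc c (t ⟨0, hk0⟩) : Fin (m + 2) → Fin p) ⟨m + 1 - (j : ℕ), by omega⟩) := by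
        constructor
        · intro h j
          rcases Nat.eq_zero_or_pos (j : ℕ) with hj0 | hj1
          · have hje : j = ⟨0, hk0⟩ := Fin.ext hj0
            rw [hje]
            have hidx : (⟨m + 1 - ((⟨0, hk0⟩ : Fin k) : ℕ), by omega⟩ : Fin (m + 2))
              = Fin.last (m + 1) := rfl
            rw [hidx, Fin.snoc_last]
          · have hjk := j.isLt
            have h2 := h ⟨(j : ℕ) - 1, by omega⟩
            rw [hUprev _ ⟨(j : ℕ) - 1, by omega⟩ (by show (j : ℕ) - 1 + 1 < k; omega)] at h2
            have hidx : (⟨m + 1 - (j : ℕ), by omega⟩ : Fin (m + 2))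
              = Fin.castSucc ⟨m + 1 - (j : ℕ), by omega⟩ := rfl
            rw [hidx, Fin.snoc_castSucc]
            have hidx2 : (⟨m + 1 - (j : ℕ), by omega⟩ : Fin (m + 1))
              = ⟨m - ((j : ℕ) - 1), by omega⟩ := Fin.ext (by simp; omega)
            rw [hidx2]
            refine (?_ : t j = t ⟨(j : ℕ) - 1 + 1, by omega⟩).trans h2
            congr 1
            exact Fin.ext (Nat.succ_pred_eq_of_pos hj1).symm
        · intro h j
          by_cases hj : (j : ℕ) + 1 < k
          · rw [hUprev _ j hj, h ⟨(j : ℕ) + 1, hj⟩]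
            have hidx : (⟨m + 1 - ((⟨(j : ℕ) + 1, hj⟩ : Fin k) : ℕ), by omega⟩ : Fin (m + 2))
              = Fin.castSucc ⟨m + 1 - ((j : ℕ) + 1), by omega⟩ := rfl
            rw [hidx, Fin.snoc_castSucc]
            congr 1
            exact Fin.ext (by simp)
          · rw [hUlast _ j hj]
            congr 1
            exact Fin.ext (by show m - (k - 1) = m - (j : ℕ); have := j.isLt; omega)
      by_cases hB : cellConfig c = κ - delta (t ⟨0, hk0⟩) ∧
          ∀ j : Fin k, U (c ⟨m - (k - 1), by omega⟩) j = c ⟨m - (j : ℕ), by omega⟩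
      · obtain ⟨hBc, hBu⟩ := hB
        have hQ : cellConfig (Fin.snoc c (t ⟨0, hk0⟩) : Fin (m + 2) → Fin p) = κ ∧
            ∀ j : Fin k, t j =
              (Fin.snoc c (t ⟨0, hk0⟩) : Fin (m + 2) → Fin p) ⟨m + 1 - (j : ℕ), by omega⟩ :=
          ⟨hconf_iff.mp hBc, ht_iff.mp hBu⟩
        have hUCs : ∀ s, s < min (m + 1) k →
            UC (c ⟨m - (k - 1), by omega⟩) s = c ⟨m - s, by omega⟩ := by
          intro s hs
          simp only [hUC]
          rw [dif_pos (show s < k by omega)]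
          exact hBu ⟨s, by omega⟩
        have hκi : ∀ i, cellConfig c i + delta (t ⟨0, hk0⟩) i = κ i := by
          intro i
          have h5 := hQ.1
          rw [cellConfig_snoc] at h5
          exact congrFun h5 i
        have hbigcard : ∀ i, ∑ s ∈ Finset.range (min (m + 1) k),
              delta (UC (c ⟨m - (k - 1), by omega⟩) s) i =
            (Finset.univ.filter
              (fun a : Fin (m + 1) => m < (a : ℕ) + min (m + 1) k ∧ c a = i)).card := by
          intro i
          rw [Finset.sum_congr rfl (fun s hs => by rw [hUCs s (Finset.mem_range.mp hs)])]
          rw [Finset.card_filter]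
          simp only [ite_and]
          rw [← Finset.sum_filter (fun a : Fin (m + 1) => m < (a : ℕ) + min (m + 1) k)
            (fun a : Fin (m + 1) => if c a = i then 1 else 0)]
          apply Finset.sum_nbij' (i := fun (s : ℕ) => (⟨m - s, by omega⟩ : Fin (m + 1)))
            (j := fun (a : Fin (m + 1)) => m - (a : ℕ))
          · intro s hs
            rw [Finset.mem_range] at hs
            simp only [Finset.mem_filter]
            exact ⟨Finset.mem_univ _, by show m < m - s + min (m + 1) k; omega⟩
          · intro a ha
            rw [Finset.mem_filter] at ha
            rw [Finset.mem_range]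
            have h2 := ha.2
            have h3 := a.isLt
            omega
          · intro s hs
            rw [Finset.mem_range] at hs
            show m - (m - s) = s
            omega
          · intro a ha
            rw [Finset.mem_filter] at ha
            have h3 := a.isLt
            exact Fin.ext (by show m - (m - (a : ℕ)) = (a : ℕ); omega)
          · intro s hs
            simp [delta, eq_comm]
        have hsplitcard : ∀ i, cellConfig c i =
            (Finset.univ.filter
              (fun a : Fin (m + 1) => m < (a : ℕ) + min (m + 1) k ∧ c a = i)).card +
            (Finset.univ.filter
              (fun a : Fin (m + 1) => (a : ℕ) + k < m + 1 ∧ c a = i)).card := by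
          intro i
          simp only [cellConfig]
          rw [Finset.card_filter, Finset.card_filter, Finset.card_filter,
            ← Finset.sum_add_distrib]
          apply Finset.sum_congr rfl
          intro a _
          have ha := a.isLt
          by_cases hc : c a = i
          · simp only [hc, eq_self_iff_true, and_true, if_true]
            split_ifs <;> omega
          · simp only [hc, and_false, if_false, if_neg hc]
        have hA : ∀ i, ND (c ⟨m - (k - 1), by omega⟩) i ≤ κ i := by
          intro i
          simp only [hND]
          rw [hbigcard i]
          have hle : (Finset.univ.filter
              (fun a : Fin (m + 1) => m < (a : ℕ) + min (m + 1) k ∧ c a = i)).card ≤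
              cellConfig c i := by
            apply Finset.card_le_card
            intro a ha
            rw [Finset.mem_filter] at ha ⊢
            exact ⟨ha.1, ha.2.2⟩
          have := hκi i
          omega
        rw [if_pos hA, if_pos (And.intro hBc hBu), if_pos hQ]
        rw [kW_snoc k w r rt c (t ⟨0, hk0⟩)]
        congr 1
        · congr 1
          apply Finset.prod_congr rfl
          intro s hs
          rw [hUCs s (Finset.mem_range.mp hs)]
        · rw [prod_fib c _ (fun i => r i (t ⟨0, hk0⟩))]
          apply Finset.prod_congr rfl
          intro i _
          congr 1
          rw [Finset.filter_filter]
          simp only [hND]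
          rw [hbigcard i]
          have e2 := hsplitcard i
          have e3 := hκi i
          omega
      · have hnQ : ¬(cellConfig (Fin.snoc c (t ⟨0, hk0⟩) : Fin (m + 2) → Fin p) = κ ∧
            ∀ j : Fin k, t j =
              (Fin.snoc c (t ⟨0, hk0⟩) : Fin (m + 2) → Fin p) ⟨m + 1 - (j : ℕ), by omega⟩) := by
          intro hQ
          exact hB ⟨hconf_iff.mpr hQ.1, ht_iff.mpr hQ.2⟩
        rw [if_neg hnQ, if_neg hB, zero_mul, zero_mul, zero_mul, ite_self]

theorem stmt16 {R : Type*} [CommRing R] {p : ℕ} (hp : 1 ≤ p) (k : ℕ) (hk : 1 ≤ k)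
    (w : Fin p → R) (r : Fin p → Fin p → R) (rt : ℕ → Fin p → Fin p → R)
    (n : ℕ) (hn : k < n) :
    ∑ κ ∈ Finset.Nat.antidiagonalTuple p n, ∑ t : Fin k → Fin p, Tk k w r rt n κ t =
      ∑ c : Fin n → Fin p, kW k w r rt c := by
  obtain ⟨n', rfl⟩ : ∃ n', n = n' + 1 := ⟨n - 1, by omega⟩
  simp only [Tk_eq hk w r rt n']
  rw [Finset.sum_congr rfl (fun κ _ => Finset.sum_comm), Finset.sum_comm]
  apply Finset.sum_congr rfl
  intro c _
  have hmem : cellConfig c ∈ Finset.Nat.antidiagonalTuple p (n' + 1) := by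
    rw [Finset.Nat.mem_antidiagonalTuple]
    have h0 := Finset.card_eq_sum_card_fiberwise
      (f := c) (t := (Finset.univ : Finset (Fin p))) (s := Finset.univ)
      (fun x _ => Finset.mem_univ _)
    simp only [cellConfig]
    rw [← h0, Finset.card_univ, Fintype.card_fin]
  have step1 : ∀ κ ∈ Finset.Nat.antidiagonalTuple p (n' + 1),
      (∑ t : Fin k → Fin p,
        if cellConfig c = κ ∧ ∀ j : Fin k, t j = c ⟨n' - (j : ℕ), by omega⟩
        then kW k w r rt c else 0) =
      (if cellConfig c = κ then kW k w r rt c else 0) := by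
    intro κ _
    have hre : ∀ t : Fin k → Fin p,
        (if cellConfig c = κ ∧ ∀ j : Fin k, t j = c ⟨n' - (j : ℕ), by omega⟩
          then kW k w r rt c else 0) =
        (if t = (fun j : Fin k => c ⟨n' - (j : ℕ), by omega⟩)
          then (if cellConfig c = κ then kW k w r rt c else 0) else 0) := by
      intro t
      have hiff : (cellConfig c = κ ∧ ∀ j : Fin k, t j = c ⟨n' - (j : ℕ), by omega⟩) ↔
          ((t = fun j : Fin k => c ⟨n' - (j : ℕ), by omega⟩) ∧ cellConfig c = κ) := by
        constructor
        · rintro ⟨h1, h2⟩; exact ⟨funext h2, h1⟩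
        · rintro ⟨h1, h2⟩; exact ⟨h2, fun j => congrFun h1 j⟩
      rw [if_congr hiff rfl rfl, ite_and]
    rw [Finset.sum_congr rfl (fun t _ => hre t)]
    rw [Finset.sum_ite_eq' Finset.univ (fun j : Fin k => c ⟨n' - (j : ℕ), by omega⟩)]
    rw [if_pos (Finset.mem_univ _)]
  rw [Finset.sum_congr rfl step1]
  rw [Finset.sum_ite_eq (Finset.Nat.antidiagonalTuple p (n' + 1)) (cellConfig c)]
  rw [if_pos hmem]
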